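/- Let I be a finite set of items with a size function s : I → ℝ such that every item has a size in (1/4, 1]. Let P and Q be packings of I into bins of capacity 1 such that every nonempty bin of P has one of the types BL, BS, B, LLS, LL, SSS, and every nonempty bin of Q has one of the types BL, BS, B, LLS, LL, LSS, SSS. Assume P is BL-thorough (for all items b of class B and l of class L with s(b) + s(l) ≤ 1, the bin of b in P or the bin of l in P is of type BL), BS-thorough (for all items b of class B and x of class S with s(b) + s(x) ≤ 1, the bin of b in P has type BL or BS, or the bin of x in P has type BL or BS), and LLS-thorough (there do not exist two distinct bins of P, each of type LL or SSS, together with two items of class L and one item of class S all taken from these two bins whose total size is at most 1). Assume further that no bin of Q of type BS and no bin of Q of type B contains a B item that lies in a bin of type BL in P. Then N_P(BS) + N_P(LL) + 2 * N_Q(LSS) ≥ 3 * (N_P(SSS) - N_Q(SSS)). -/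

import Mathlib

open Classical

/-- The set of items that packing `P` assigns to bin `b`. -/
noncomputable def binOf {ι β : Type*} [Fintype ι] (P : ι → β) (b : β) : Finset ι :=
  Finset.univ.filter (fun i => P i = b)

/-- `P` is a valid packing into bins of capacity 1. -/
def IsPacking {ι β : Type*} [Fintype ι] (s : ι → ℝ) (P : ι → β) : Prop :=
  ∀ b : β, ∑ i ∈ binOf P b, s i ≤ 1

/-- A `B` (big) item has size in `(1/2, 1]`. -/
def isB {ι : Type*} (s : ι → ℝ) (i : ι) : Prop := 1 / 2 < s i ∧ s i ≤ 1

/-- An `L` (large) item has size in `(1/3, 1/2]`. -/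
def isL {ι : Type*} (s : ι → ℝ) (i : ι) : Prop := 1 / 3 < s i ∧ s i ≤ 1 / 2

/-- An `S` (small) item has size in `(1/4, 1/3]`. -/
def isS {ι : Type*} (s : ι → ℝ) (i : ι) : Prop := 1 / 4 < s i ∧ s i ≤ 1 / 3

/-- Bin `b` of packing `P` contains exactly `nb` items of class `B`, `nl` of class `L`,
`ns` of class `S` and nothing else. -/
noncomputable def BinHasType {ι β : Type*} [Fintype ι] (s : ι → ℝ) (P : ι → β) (b : β)
    (nb nl ns : ℕ) : Prop :=
  ((binOf P b).filter (fun i => isB s i)).card = nb ∧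
  ((binOf P b).filter (fun i => isL s i)).card = nl ∧
  ((binOf P b).filter (fun i => isS s i)).card = ns ∧
  (binOf P b).card = nb + nl + ns

/-- Number of bins of packing `P` containing exactly `nb` `B` items, `nl` `L` items and
`ns` `S` items (and nothing else). -/
noncomputable def numBins {ι β : Type*} [Fintype ι] [DecidableEq β] (s : ι → ℝ)
    (P : ι → β) (nb nl ns : ℕ) : ℕ :=
  ((Finset.univ.image P).filter (fun b => BinHasType s P b nb nl ns)).card

section Helpers

variable {ι β : Type*} [Fintype ι]

lemma mem_binOf_self (R : ι → β) (i : ι) : i ∈ binOf R (R i) := by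
  simp [binOf]

lemma class_notin_zero {R : ι → β} {p : ι → Prop} {i : ι}
    (hp : p i) (h : ((binOf R (R i)).filter (fun j => p j)).card = 0) : False := by
  rw [Finset.card_eq_zero] at h
  have hmem : i ∈ (binOf R (R i)).filter (fun j => p j) :=
    Finset.mem_filter.mpr ⟨mem_binOf_self R i, hp⟩
  rw [h] at hmem
  exact absurd hmem (Finset.notMem_empty i)

lemma type_unique {s : ι → ℝ} {R : ι → β} {b : β} {a1 a2 a3 c1 c2 c3 : ℕ}
    (h1 : BinHasType s R b a1 a2 a3) (h2 : BinHasType s R b c1 c2 c3) :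
    a1 = c1 ∧ a2 = c2 ∧ a3 = c3 :=
  ⟨h1.1.symm.trans h2.1, h1.2.1.symm.trans h2.2.1, h1.2.2.1.symm.trans h2.2.2.1⟩

lemma disj_filter_types {s : ι → ℝ} {R : ι → β} {p : ι → Prop} {a1 a2 a3 c1 c2 c3 : ℕ}
    (hne : ¬(a1 = c1 ∧ a2 = c2 ∧ a3 = c3)) :
    Disjoint (Finset.univ.filter (fun i => p i ∧ BinHasType s R (R i) a1 a2 a3))
      (Finset.univ.filter (fun i => p i ∧ BinHasType s R (R i) c1 c2 c3)) := by
  rw [Finset.disjoint_left]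
  intro i h1 h2
  rw [Finset.mem_filter] at h1 h2
  exact hne (type_unique h1.2.2 h2.2.2)

lemma card_filter_bin [DecidableEq β] (s : ι → ℝ) (R : ι → β) (p : ι → Prop)
    (nb nl ns k : ℕ)
    (hk : ∀ b : β, BinHasType s R b nb nl ns → ((binOf R b).filter (fun j => p j)).card = k) :
    (Finset.univ.filter (fun i => p i ∧ BinHasType s R (R i) nb nl ns)).card
      = k * numBins s R nb nl ns := by
  have key : Finset.univ.filter (fun i => p i ∧ BinHasType s R (R i) nb nl ns)
      = ((Finset.univ.image R).filter (fun b => BinHasType s R b nb nl ns)).biUnion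
          (fun b => (binOf R b).filter (fun j => p j)) := by
    ext i
    constructor
    · intro hi
      rw [Finset.mem_filter] at hi
      obtain ⟨_, hp, hb⟩ := hi
      rw [Finset.mem_biUnion]
      exact ⟨R i, Finset.mem_filter.mpr ⟨Finset.mem_image.mpr ⟨i, Finset.mem_univ i, rfl⟩, hb⟩,
        Finset.mem_filter.mpr ⟨mem_binOf_self R i, hp⟩⟩
    · intro hi
      rw [Finset.mem_biUnion] at hi
      obtain ⟨b, hbT, hmem⟩ := hi
      rw [Finset.mem_filter] at hmem hbT
      have hRib : R i = b := by
        have := hmem.1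
        simpa [binOf] using this
      refine Finset.mem_filter.mpr ⟨Finset.mem_univ i, hmem.2, ?_⟩
      rw [hRib]
      exact hbT.2
  rw [key, Finset.card_biUnion]
  · have hc : ∀ b ∈ (Finset.univ.image R).filter (fun b => BinHasType s R b nb nl ns),
        ((binOf R b).filter (fun j => p j)).card = k :=
      fun b hb => hk b (Finset.mem_filter.mp hb).2
    rw [Finset.sum_congr rfl hc, Finset.sum_const, smul_eq_mul, mul_comm]
    rfl
  · intro b1 h1 b2 h2 hne
    simp only [Function.onFun]
    rw [Finset.disjoint_left]
    intro i hi1 hi2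
    rw [Finset.mem_filter] at hi1 hi2
    have e1 : R i = b1 := by simpa [binOf] using hi1.1
    have e2 : R i = b2 := by simpa [binOf] using hi2.1
    exact hne (e1 ▸ e2)

lemma count3 [DecidableEq β] (s : ι → ℝ) (R : ι → β) (p : ι → Prop)
    (a1 a2 a3 b1 b2 b3 c1 c2 c3 k1 k2 k3 : ℕ)
    (hne12 : ¬(a1 = b1 ∧ a2 = b2 ∧ a3 = b3)) (hne13 : ¬(a1 = c1 ∧ a2 = c2 ∧ a3 = c3))
    (hne23 : ¬(b1 = c1 ∧ b2 = c2 ∧ b3 = c3))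
    (hk1 : ∀ b : β, BinHasType s R b a1 a2 a3 → ((binOf R b).filter (fun j => p j)).card = k1)
    (hk2 : ∀ b : β, BinHasType s R b b1 b2 b3 → ((binOf R b).filter (fun j => p j)).card = k2)
    (hk3 : ∀ b : β, BinHasType s R b c1 c2 c3 → ((binOf R b).filter (fun j => p j)).card = k3)
    (hcov : ∀ i, p i → BinHasType s R (R i) a1 a2 a3 ∨ BinHasType s R (R i) b1 b2 b3 ∨
      BinHasType s R (R i) c1 c2 c3) :
    (Finset.univ.filter (fun j => p j)).card
      = k1 * numBins s R a1 a2 a3 + k2 * numBins s R b1 b2 b3 + k3 * numBins s R c1 c2 c3 := by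
  have cov : Finset.univ.filter (fun j => p j)
      = (Finset.univ.filter (fun i => p i ∧ BinHasType s R (R i) a1 a2 a3))
        ∪ (Finset.univ.filter (fun i => p i ∧ BinHasType s R (R i) b1 b2 b3))
        ∪ (Finset.univ.filter (fun i => p i ∧ BinHasType s R (R i) c1 c2 c3)) := by
    ext i
    simp only [Finset.mem_union, Finset.mem_filter, Finset.mem_univ, true_and]
    constructor
    · intro hi
      rcases hcov i hi with h|h|h
      · exact Or.inl (Or.inl ⟨hi, h⟩)
      · exact Or.inl (Or.inr ⟨hi, h⟩)
      · exact Or.inr ⟨hi, h⟩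
    · rintro ((⟨hi, _⟩|⟨hi, _⟩)|⟨hi, _⟩) <;> exact hi
  rw [cov, Finset.card_union_of_disjoint, Finset.card_union_of_disjoint,
    card_filter_bin s R p _ _ _ _ hk1, card_filter_bin s R p _ _ _ _ hk2,
    card_filter_bin s R p _ _ _ _ hk3]
  · exact disj_filter_types hne12
  · exact Finset.disjoint_union_left.mpr ⟨disj_filter_types hne13, disj_filter_types hne23⟩

lemma count4 [DecidableEq β] (s : ι → ℝ) (R : ι → β) (p : ι → Prop)
    (a1 a2 a3 b1 b2 b3 c1 c2 c3 d1 d2 d3 k1 k2 k3 k4 : ℕ)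
    (hne12 : ¬(a1 = b1 ∧ a2 = b2 ∧ a3 = b3)) (hne13 : ¬(a1 = c1 ∧ a2 = c2 ∧ a3 = c3))
    (hne14 : ¬(a1 = d1 ∧ a2 = d2 ∧ a3 = d3))
    (hne23 : ¬(b1 = c1 ∧ b2 = c2 ∧ b3 = c3)) (hne24 : ¬(b1 = d1 ∧ b2 = d2 ∧ b3 = d3))
    (hne34 : ¬(c1 = d1 ∧ c2 = d2 ∧ c3 = d3))
    (hk1 : ∀ b : β, BinHasType s R b a1 a2 a3 → ((binOf R b).filter (fun j => p j)).card = k1)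
    (hk2 : ∀ b : β, BinHasType s R b b1 b2 b3 → ((binOf R b).filter (fun j => p j)).card = k2)
    (hk3 : ∀ b : β, BinHasType s R b c1 c2 c3 → ((binOf R b).filter (fun j => p j)).card = k3)
    (hk4 : ∀ b : β, BinHasType s R b d1 d2 d3 → ((binOf R b).filter (fun j => p j)).card = k4)
    (hcov : ∀ i, p i → BinHasType s R (R i) a1 a2 a3 ∨ BinHasType s R (R i) b1 b2 b3 ∨
      BinHasType s R (R i) c1 c2 c3 ∨ BinHasType s R (R i) d1 d2 d3) :
    (Finset.univ.filter (fun j => p j)).card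
      = k1 * numBins s R a1 a2 a3 + k2 * numBins s R b1 b2 b3 + k3 * numBins s R c1 c2 c3
        + k4 * numBins s R d1 d2 d3 := by
  have cov : Finset.univ.filter (fun j => p j)
      = (Finset.univ.filter (fun i => p i ∧ BinHasType s R (R i) a1 a2 a3))
        ∪ (Finset.univ.filter (fun i => p i ∧ BinHasType s R (R i) b1 b2 b3))
        ∪ (Finset.univ.filter (fun i => p i ∧ BinHasType s R (R i) c1 c2 c3))
        ∪ (Finset.univ.filter (fun i => p i ∧ BinHasType s R (R i) d1 d2 d3)) := by
    ext i
    simp only [Finset.mem_union, Finset.mem_filter, Finset.mem_univ, true_and]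
    constructor
    · intro hi
      rcases hcov i hi with h|h|h|h
      · exact Or.inl (Or.inl (Or.inl ⟨hi, h⟩))
      · exact Or.inl (Or.inl (Or.inr ⟨hi, h⟩))
      · exact Or.inl (Or.inr ⟨hi, h⟩)
      · exact Or.inr ⟨hi, h⟩
    · rintro (((⟨hi, _⟩|⟨hi, _⟩)|⟨hi, _⟩)|⟨hi, _⟩) <;> exact hi
  rw [cov, Finset.card_union_of_disjoint, Finset.card_union_of_disjoint,
    Finset.card_union_of_disjoint,
    card_filter_bin s R p _ _ _ _ hk1, card_filter_bin s R p _ _ _ _ hk2,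
    card_filter_bin s R p _ _ _ _ hk3, card_filter_bin s R p _ _ _ _ hk4]
  · exact disj_filter_types hne12
  · exact Finset.disjoint_union_left.mpr ⟨disj_filter_types hne13, disj_filter_types hne23⟩
  · exact Finset.disjoint_union_left.mpr ⟨Finset.disjoint_union_left.mpr
      ⟨disj_filter_types hne14, disj_filter_types hne24⟩, disj_filter_types hne34⟩

end Helpers

lemma card_bin_total {ι β : Type*} [Fintype ι] [DecidableEq β] (s : ι → ℝ) (R : ι → β)
    (nb nl ns : ℕ) :
    (Finset.univ.filter (fun i => BinHasType s R (R i) nb nl ns)).card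
      = (nb + nl + ns) * numBins s R nb nl ns := by
  have key : Finset.univ.filter (fun i => BinHasType s R (R i) nb nl ns)
      = ((Finset.univ.image R).filter (fun b => BinHasType s R b nb nl ns)).biUnion
          (fun b => binOf R b) := by
    ext i
    constructor
    · intro hi
      rw [Finset.mem_filter] at hi
      rw [Finset.mem_biUnion]
      exact ⟨R i, Finset.mem_filter.mpr ⟨Finset.mem_image.mpr ⟨i, Finset.mem_univ i, rfl⟩,
        hi.2⟩, mem_binOf_self R i⟩
    · intro hi
      rw [Finset.mem_biUnion] at hi
      obtain ⟨b, hbT, hmem⟩ := hi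
      rw [Finset.mem_filter] at hbT
      have hRib : R i = b := by simpa [binOf] using hmem
      refine Finset.mem_filter.mpr ⟨Finset.mem_univ i, ?_⟩
      rw [hRib]
      exact hbT.2
  rw [key, Finset.card_biUnion]
  · have hc : ∀ b ∈ (Finset.univ.image R).filter (fun b => BinHasType s R b nb nl ns),
        (binOf R b).card = nb + nl + ns :=
      fun b hb => (Finset.mem_filter.mp hb).2.2.2.2
    rw [Finset.sum_congr rfl hc, Finset.sum_const, smul_eq_mul, mul_comm]
    rfl
  · intro b1 h1 b2 h2 hne
    simp only [Function.onFun]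
    rw [Finset.disjoint_left]
    intro i hi1 hi2
    have e1 : R i = b1 := by simpa [binOf] using hi1
    have e2 : R i = b2 := by simpa [binOf] using hi2
    exact hne (e1 ▸ e2)

/-- Lemma 8/9 of the paper (`N_P(BS) + N_P(LL) + 2 N_Q(LSS) ≥ 3 (N_P(SSS) - N_Q(SSS))`). -/
theorem boundS {ι β γ : Type*} [Fintype ι] [DecidableEq β] [DecidableEq γ]
    (s : ι → ℝ) (hs : ∀ i, 1 / 4 < s i ∧ s i ≤ 1)
    (P : ι → β) (Q : ι → γ)
    (hP : IsPacking s P) (hQ : IsPacking s Q)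
    (hPtypes : ∀ b : β, (∃ i, P i = b) →
      BinHasType s P b 1 1 0 ∨ BinHasType s P b 1 0 1 ∨ BinHasType s P b 1 0 0 ∨
      BinHasType s P b 0 2 1 ∨ BinHasType s P b 0 2 0 ∨
      BinHasType s P b 0 0 3)
    (hQtypes : ∀ b : γ, (∃ i, Q i = b) →
      BinHasType s Q b 1 1 0 ∨ BinHasType s Q b 1 0 1 ∨ BinHasType s Q b 1 0 0 ∨
      BinHasType s Q b 0 2 1 ∨ BinHasType s Q b 0 2 0 ∨ BinHasType s Q b 0 1 2 ∨
      BinHasType s Q b 0 0 3)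
    (hBLthorough : ∀ bi li : ι, isB s bi → isL s li → s bi + s li ≤ 1 →
      BinHasType s P (P bi) 1 1 0 ∨ BinHasType s P (P li) 1 1 0)
    (hBSthorough : ∀ bi xi : ι, isB s bi → isS s xi → s bi + s xi ≤ 1 →
      (BinHasType s P (P bi) 1 1 0 ∨ BinHasType s P (P bi) 1 0 1) ∨
      (BinHasType s P (P xi) 1 1 0 ∨ BinHasType s P (P xi) 1 0 1))
    (hLLSthorough : ¬ ∃ b1 b2 : β, b1 ≠ b2 ∧
      (BinHasType s P b1 0 2 0 ∨ BinHasType s P b1 0 0 3) ∧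
      (BinHasType s P b2 0 2 0 ∨ BinHasType s P b2 0 0 3) ∧
      ∃ l1 l2 x : ι, l1 ≠ l2 ∧ isL s l1 ∧ isL s l2 ∧ isS s x ∧
        (P l1 = b1 ∨ P l1 = b2) ∧ (P l2 = b1 ∨ P l2 = b2) ∧ (P x = b1 ∨ P x = b2) ∧
        s l1 + s l2 + s x ≤ 1)
    (hQnormBS : ∀ i, isB s i → BinHasType s P (P i) 1 1 0 →
      ¬ BinHasType s Q (Q i) 1 0 1)
    (hQnormB : ∀ i, isB s i → BinHasType s P (P i) 1 1 0 →
      ¬ BinHasType s Q (Q i) 1 0 0) :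
    (numBins s P 1 0 1 : ℤ) + numBins s P 0 2 0 + 2 * numBins s Q 0 1 2 ≥
      3 * ((numBins s P 0 0 3 : ℤ) - numBins s Q 0 0 3) := by
  classical
  -- S items counted via P
  have hSP : (Finset.univ.filter (fun j => isS s j)).card
      = 1 * numBins s P 1 0 1 + 1 * numBins s P 0 2 1 + 3 * numBins s P 0 0 3 := by
    refine count3 s P (fun j => isS s j) 1 0 1 0 2 1 0 0 3 1 1 3
      (by omega) (by omega) (by omega)
      (fun b h => h.2.2.1) (fun b h => h.2.2.1) (fun b h => h.2.2.1) ?_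
    intro i hi
    rcases hPtypes (P i) ⟨i, rfl⟩ with h|h|h|h|h|h
    · exact (class_notin_zero hi h.2.2.1).elim
    · exact Or.inl h
    · exact (class_notin_zero hi h.2.2.1).elim
    · exact Or.inr (Or.inl h)
    · exact (class_notin_zero hi h.2.2.1).elim
    · exact Or.inr (Or.inr h)
  -- S items counted via Q
  have hSQ : (Finset.univ.filter (fun j => isS s j)).card
      = 1 * numBins s Q 1 0 1 + 1 * numBins s Q 0 2 1 + 2 * numBins s Q 0 1 2
        + 3 * numBins s Q 0 0 3 := by
    refine count4 s Q (fun j => isS s j) 1 0 1 0 2 1 0 1 2 0 0 3 1 1 2 3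
      (by omega) (by omega) (by omega) (by omega) (by omega) (by omega)
      (fun b h => h.2.2.1) (fun b h => h.2.2.1) (fun b h => h.2.2.1) (fun b h => h.2.2.1) ?_
    intro i hi
    rcases hQtypes (Q i) ⟨i, rfl⟩ with h|h|h|h|h|h|h
    · exact (class_notin_zero hi h.2.2.1).elim
    · exact Or.inl h
    · exact (class_notin_zero hi h.2.2.1).elim
    · exact Or.inr (Or.inl h)
    · exact (class_notin_zero hi h.2.2.1).elim
    · exact Or.inr (Or.inr (Or.inl h))
    · exact Or.inr (Or.inr (Or.inr h))
  -- L items counted via P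
  have hLP : (Finset.univ.filter (fun j => isL s j)).card
      = 1 * numBins s P 1 1 0 + 2 * numBins s P 0 2 1 + 2 * numBins s P 0 2 0 := by
    refine count3 s P (fun j => isL s j) 1 1 0 0 2 1 0 2 0 1 2 2
      (by omega) (by omega) (by omega)
      (fun b h => h.2.1) (fun b h => h.2.1) (fun b h => h.2.1) ?_
    intro i hi
    rcases hPtypes (P i) ⟨i, rfl⟩ with h|h|h|h|h|h
    · exact Or.inl h
    · exact (class_notin_zero hi h.2.1).elim
    · exact (class_notin_zero hi h.2.1).elim
    · exact Or.inr (Or.inl h)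
    · exact Or.inr (Or.inr h)
    · exact (class_notin_zero hi h.2.1).elim
  -- L items counted via Q
  have hLQ : (Finset.univ.filter (fun j => isL s j)).card
      = 1 * numBins s Q 1 1 0 + 2 * numBins s Q 0 2 1 + 2 * numBins s Q 0 2 0
        + 1 * numBins s Q 0 1 2 := by
    refine count4 s Q (fun j => isL s j) 1 1 0 0 2 1 0 2 0 0 1 2 1 2 2 1
      (by omega) (by omega) (by omega) (by omega) (by omega) (by omega)
      (fun b h => h.2.1) (fun b h => h.2.1) (fun b h => h.2.1) (fun b h => h.2.1) ?_
    intro i hi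
    rcases hQtypes (Q i) ⟨i, rfl⟩ with h|h|h|h|h|h|h
    · exact Or.inl h
    · exact (class_notin_zero hi h.2.1).elim
    · exact (class_notin_zero hi h.2.1).elim
    · exact Or.inr (Or.inl h)
    · exact Or.inr (Or.inr (Or.inl h))
    · exact Or.inr (Or.inr (Or.inr h))
    · exact (class_notin_zero hi h.2.1).elim
  -- N_P(BL) ≤ N_Q(BL)
  have hBLle : numBins s P 1 1 0 ≤ numBins s Q 1 1 0 := by
    have eP : (Finset.univ.filter (fun i => isB s i ∧ BinHasType s P (P i) 1 1 0)).card
        = 1 * numBins s P 1 1 0 :=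
      card_filter_bin s P (fun j => isB s j) 1 1 0 1 (fun b h => h.1)
    have eQ : (Finset.univ.filter (fun i => isB s i ∧ BinHasType s Q (Q i) 1 1 0)).card
        = 1 * numBins s Q 1 1 0 :=
      card_filter_bin s Q (fun j => isB s j) 1 1 0 1 (fun b h => h.1)
    have hsub : (Finset.univ.filter (fun i => isB s i ∧ BinHasType s P (P i) 1 1 0))
        ⊆ (Finset.univ.filter (fun i => isB s i ∧ BinHasType s Q (Q i) 1 1 0)) := by
      intro i hi
      rw [Finset.mem_filter] at hi ⊢
      obtain ⟨_, hiB, hiP⟩ := hi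
      refine ⟨Finset.mem_univ i, hiB, ?_⟩
      rcases hQtypes (Q i) ⟨i, rfl⟩ with h|h|h|h|h|h|h
      · exact h
      · exact absurd h (hQnormBS i hiB hiP)
      · exact absurd h (hQnormB i hiB hiP)
      · exact (class_notin_zero hiB h.1).elim
      · exact (class_notin_zero hiB h.1).elim
      · exact (class_notin_zero hiB h.1).elim
      · exact (class_notin_zero hiB h.1).elim
    have := Finset.card_le_card hsub
    omega
  -- N_Q(BS) ≤ 2 * N_P(BS)
  have hBSle : numBins s Q 1 0 1 ≤ 2 * numBins s P 1 0 1 := by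
    have hchoice : ∀ q : γ, BinHasType s Q q 1 0 1 →
        ∃ i : ι, Q i = q ∧ BinHasType s P (P i) 1 0 1 := by
      intro q hq
      obtain ⟨b, hb⟩ := Finset.card_eq_one.mp hq.1
      obtain ⟨x, hx⟩ := Finset.card_eq_one.mp hq.2.2.1
      have hbmem : b ∈ (binOf Q q).filter (fun i => isB s i) := by
        rw [hb]; exact Finset.mem_singleton_self b
      have hxmem : x ∈ (binOf Q q).filter (fun i => isS s i) := by
        rw [hx]; exact Finset.mem_singleton_self x
      rw [Finset.mem_filter] at hbmem hxmem
      have hbB : isB s b := hbmem.2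
      have hxS : isS s x := hxmem.2
      have hbq : Q b = q := by
        have := hbmem.1; simpa [binOf] using this
      have hxq : Q x = q := by
        have := hxmem.1; simpa [binOf] using this
      have hne : b ≠ x := by
        intro h
        have h1 := hbB.1
        have h2 := hxS.2
        rw [h] at h1
        linarith
      have hcard : (binOf Q q).card = 2 := by
        have := hq.2.2.2; omega
      have hsub : ({b, x} : Finset ι) ⊆ binOf Q q := by
        rw [Finset.insert_subset_iff, Finset.singleton_subset_iff]
        exact ⟨hbmem.1, hxmem.1⟩
      have hbin : binOf Q q = {b, x} :=
        (Finset.eq_of_subset_of_card_le hsub (by rw [hcard, Finset.card_pair hne])).symm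
      have hsum : s b + s x ≤ 1 := by
        have := hQ q
        rwa [hbin, Finset.sum_pair hne] at this
      rcases hBSthorough b x hbB hxS hsum with (h|h)|(h|h)
      · exact absurd (by rw [hbq]; exact hq) (hQnormBS b hbB h)
      · exact ⟨b, hbq, h⟩
      · exact (class_notin_zero hxS h.2.2.1).elim
      · exact ⟨x, hxq, h⟩
    by_cases hne : Nonempty ι
    · have hinh : Inhabited ι := Classical.inhabited_of_nonempty hne
      have eT : (Finset.univ.filter (fun i => BinHasType s P (P i) 1 0 1)).card
          = 2 * numBins s P 1 0 1 := by
        have := card_bin_total s P 1 0 1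
        omega
      have hle : numBins s Q 1 0 1
          ≤ (Finset.univ.filter (fun i => BinHasType s P (P i) 1 0 1)).card := by
        unfold numBins
        refine Finset.card_le_card_of_injOn
          (fun q => if h : ∃ i : ι, Q i = q ∧ BinHasType s P (P i) 1 0 1 then h.choose
            else default) ?_ ?_
        · intro q hqmem
          have hq : BinHasType s Q q 1 0 1 := (Finset.mem_filter.mp hqmem).2
          have hex := hchoice q hq
          simp only [dif_pos hex]
          exact Finset.mem_filter.mpr ⟨Finset.mem_univ _, hex.choose_spec.2⟩
        · intro q1 hq1 q2 hq2 heq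
          simp only [Finset.coe_filter, Set.mem_setOf_eq] at hq1 hq2
          have hex1 := hchoice q1 hq1.2
          have hex2 := hchoice q2 hq2.2
          simp only [dif_pos hex1, dif_pos hex2] at heq
          rw [← hex1.choose_spec.1, ← hex2.choose_spec.1, heq]
      omega
    · have hempty : IsEmpty ι := not_nonempty_iff.mp hne
      have huniv : (Finset.univ : Finset ι) = ∅ := Finset.univ_eq_empty
      have h1 : numBins s Q 1 0 1 = 0 := by
        unfold numBins
        rw [huniv]
        simp
      omega
  omega
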